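/- For real numbers v ∈ ℝ\{0} and w > 0, the limit as y → 1⁻ of ∫₀^y (1 - t^w)^(-1/v) dt equals (1/w)·B(1 - 1/v, 1/w) when v ∉ [0,1], and equals +∞ when v ∈ (0,1], where B denotes the Beta function. -/

import Mathlib

open MeasureTheory Filter Set

/-- The real Beta function `B(a,b) = Γ(a)Γ(b)/Γ(a+b)`. -/
noncomputable def realBeta (a b : ℝ) : ℝ := Real.Gamma a * Real.Gamma b / Real.Gamma (a + b)

lemma realBeta_symm (a b : ℝ) : realBeta a b = realBeta b a := by
  unfold realBeta; rw [add_comm, mul_comm]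

lemma betaAux_eqOn {a b : ℝ} :
    ∀ x ∈ Icc (0:ℝ) 1,
      ((x:ℂ) ^ ((a:ℂ) - 1) * (1 - (x:ℂ)) ^ ((b:ℂ) - 1)) =
        ((x ^ (a - 1) * (1 - x) ^ (b - 1) : ℝ) : ℂ) := by
  intro x hx
  rw [show ((a:ℂ) - 1) = ((a - 1 : ℝ) : ℂ) by push_cast; ring,
    show (1 - (x:ℂ)) = ((1 - x : ℝ) : ℂ) by push_cast; ring,
    show ((b:ℂ) - 1) = ((b - 1 : ℝ) : ℂ) by push_cast; ring,
    ← Complex.ofReal_cpow hx.1, ← Complex.ofReal_cpow (by linarith [hx.2] : (0:ℝ) ≤ 1 - x),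
    ← Complex.ofReal_mul]

lemma betaAux_integrableOn {a b : ℝ} (ha : 0 < a) (hb : 0 < b) :
    IntegrableOn (fun x : ℝ => x ^ (a - 1) * (1 - x) ^ (b - 1)) (Ioc 0 1) := by
  have h := Complex.betaIntegral_convergent (u := (a:ℂ)) (v := (b:ℂ)) (by simpa) (by simpa)
  rw [intervalIntegrable_iff_integrableOn_Ioc_of_le zero_le_one] at h
  have h2 : IntegrableOn (fun x : ℝ => ((x:ℂ) ^ ((a:ℂ) - 1) * (1 - (x:ℂ)) ^ ((b:ℂ) - 1)).re) (Ioc 0 1) := h.re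
  refine IntegrableOn.congr_fun h2 (fun x hx => ?_) measurableSet_Ioc
  rw [betaAux_eqOn x ⟨hx.1.le, hx.2⟩, Complex.ofReal_re]

lemma betaAux_eval {a b : ℝ} (ha : 0 < a) (hb : 0 < b) :
    ∫ x in Ioc (0:ℝ) 1, x ^ (a - 1) * (1 - x) ^ (b - 1) = realBeta a b := by
  have key := Complex.Gamma_mul_Gamma_eq_betaIntegral (s := (a:ℂ)) (t := (b:ℂ)) (by simpa) (by simpa)
  have hint : Complex.betaIntegral a b =
      ((∫ x in Ioc (0:ℝ) 1, x ^ (a - 1) * (1 - x) ^ (b - 1) : ℝ) : ℂ) := by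
    rw [Complex.betaIntegral,
      intervalIntegral.integral_congr (g := fun x : ℝ => ((x ^ (a-1) * (1-x) ^ (b-1) : ℝ) : ℂ))
        (by rw [uIcc_of_le zero_le_one]; exact betaAux_eqOn),
      intervalIntegral.integral_ofReal, intervalIntegral.integral_of_le zero_le_one]
  have hne : Complex.Gamma ((a:ℂ) + (b:ℂ)) ≠ 0 := by
    rw [show ((a:ℂ) + b) = ((a + b : ℝ) : ℂ) by push_cast; ring, Complex.Gamma_ofReal]
    exact_mod_cast (Real.Gamma_pos_of_pos (by linarith)).ne'
  have : ((∫ x in Ioc (0:ℝ) 1, x ^ (a - 1) * (1 - x) ^ (b - 1) : ℝ) : ℂ) = ((realBeta a b : ℝ) : ℂ) := by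
    rw [← hint]
    unfold realBeta
    push_cast
    rw [← Complex.Gamma_ofReal, ← Complex.Gamma_ofReal, ← Complex.Gamma_ofReal]
    push_cast
    rw [eq_div_iff hne, mul_comm, ← key]
  exact_mod_cast this

lemma case1_key {v w : ℝ} (hw : 0 < w) (hb : 0 < 1 - 1/v) :
    IntegrableOn (fun t : ℝ => (1 - t ^ w) ^ (-1/v)) (Ioo 0 1) ∧
    (∫ t in Ioo (0:ℝ) 1, (1 - t ^ w) ^ (-1/v)) = 1/w * realBeta (1 - 1/v) (1/w) := by
  have ha : (0:ℝ) < 1/w := by positivity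
  set f : ℝ → ℝ := fun t => (1 - t ^ w) ^ (-1/v) with hfdef
  set g : ℝ → ℝ := fun u => u ^ (1/w - 1) * (1 - u) ^ ((1 - 1/v) - 1) with hg
  have hmeas : MeasurableSet (Ioo (0:ℝ) 1) := measurableSet_Ioo
  have hderiv : ∀ x ∈ Ioo (0:ℝ) 1,
      HasDerivWithinAt (fun t : ℝ => t ^ w) (w * x ^ (w - 1)) (Ioo 0 1) x := fun x hx =>
    (Real.hasDerivAt_rpow_const (Or.inl hx.1.ne')).hasDerivWithinAt
  have hinj : InjOn (fun t : ℝ => t ^ w) (Ioo 0 1) := by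
    have : StrictMonoOn (fun t : ℝ => t ^ w) (Ioo 0 1) := fun x hx y _ h =>
      Real.rpow_lt_rpow hx.1.le h hw
    exact this.injOn
  have himg : (fun t : ℝ => t ^ w) '' Ioo 0 1 = Ioo 0 1 := by
    ext u
    simp only [mem_image, mem_Ioo]
    constructor
    · rintro ⟨t, ⟨ht0, ht1⟩, rfl⟩
      exact ⟨Real.rpow_pos_of_pos ht0 w, Real.rpow_lt_one ht0.le ht1 hw⟩
    · rintro ⟨hu0, hu1⟩
      exact ⟨u ^ w⁻¹, ⟨Real.rpow_pos_of_pos hu0 _,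
        Real.rpow_lt_one hu0.le hu1 (by positivity)⟩, Real.rpow_inv_rpow hu0.le hw.ne'⟩
  have hRH : ∀ x ∈ Ioo (0:ℝ) 1, |w * x ^ (w - 1)| • g (x ^ w) = w * f x := by
    intro x hx
    have hx0 := hx.1
    have habs : |w * x ^ (w - 1)| = w * x ^ (w - 1) :=
      abs_of_pos (by positivity)
    have h1 : (x ^ w) ^ (1/w - 1) = x ^ (1 - w) := by
      rw [← Real.rpow_mul hx0.le]
      congr 1
      field_simp
    rw [smul_eq_mul, habs, hg]
    simp only []
    rw [h1]
    have h2 : x ^ (w - 1) * x ^ (1 - w) = 1 := by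
      rw [← Real.rpow_add hx0]; norm_num
    have h3 : ((1 - 1/v) - 1 : ℝ) = -1/v := by ring
    calc w * x ^ (w - 1) * (x ^ (1 - w) * (1 - x ^ w) ^ ((1 - 1/v) - 1))
        = w * ((x ^ (w - 1) * x ^ (1 - w)) * (1 - x ^ w) ^ ((1 - 1/v) - 1)) := by ring
      _ = w * f x := by rw [h2, h3, hfdef]; ring
  have hgIoc : IntegrableOn g (Ioc 0 1) := betaAux_integrableOn ha hb
  have hgint : IntegrableOn g (Ioo 0 1) := hgIoc.mono Ioo_subset_Ioc_self le_rfl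
  have hfint : IntegrableOn f (Ioo 0 1) := by
    have h := (integrableOn_image_iff_integrableOn_abs_deriv_smul hmeas hderiv hinj g)
    rw [himg] at h
    have h2 : IntegrableOn (fun x => |w * x ^ (w - 1)| • g (x ^ w)) (Ioo 0 1) := h.mp hgint
    have h3 : IntegrableOn (fun x => w * f x) (Ioo 0 1) :=
      IntegrableOn.congr_fun h2 hRH hmeas
    have h4 := h3.const_mul w⁻¹
    refine IntegrableOn.congr_fun h4 (fun x _ => ?_) hmeas
    field_simp
  refine ⟨hfint, ?_⟩
  have hcov := integral_image_eq_integral_abs_deriv_smul hmeas hderiv hinj g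
  rw [himg] at hcov
  rw [setIntegral_congr_fun hmeas hRH, MeasureTheory.integral_const_mul] at hcov
  have hval : ∫ u in Ioo (0:ℝ) 1, g u = realBeta (1/w) (1 - 1/v) := by
    rw [← MeasureTheory.integral_Ioc_eq_integral_Ioo]
    exact betaAux_eval ha hb
  rw [hval, realBeta_symm] at hcov
  field_simp at hcov ⊢
  linarith

lemma case1 {v w : ℝ} (hw : 0 < w) (hb : 0 < 1 - 1/v) :
    Tendsto (fun y : ℝ => ∫ t in (0:ℝ)..y, (1 - t ^ w) ^ (-1 / v))
      (nhdsWithin 1 (Iio 1)) (nhds (1 / w * realBeta (1 - 1 / v) (1 / w))) := by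
  obtain ⟨hfint, hval⟩ := case1_key hw hb
  set f : ℝ → ℝ := fun t => (1 - t ^ w) ^ (-1/v) with hfdef
  have huIcc : uIcc (0:ℝ) 1 = Icc 0 1 := uIcc_of_le zero_le_one
  have hfintIcc : IntegrableOn f (Icc 0 1) := by
    rw [integrableOn_Icc_iff_integrableOn_Ioo]; exact hfint
  have hcont : ContinuousOn (fun y : ℝ => ∫ t in (0:ℝ)..y, f t) (uIcc (0:ℝ) 1) :=
    intervalIntegral.continuousOn_primitive_interval (by rwa [huIcc])
  have hcw : ContinuousWithinAt (fun y : ℝ => ∫ t in (0:ℝ)..y, f t) (uIcc (0:ℝ) 1) 1 :=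
    hcont 1 (by rw [huIcc]; exact ⟨zero_le_one, le_refl 1⟩)
  have heq : nhdsWithin (1:ℝ) (Iio 1) = nhdsWithin (1:ℝ) (Ioo (0:ℝ) 1) :=
    nhdsWithin_eq_nhdsWithin' (isOpen_Ioi.mem_nhds one_pos)
      (by ext x; simp only [mem_inter_iff, mem_Iio, mem_Ioi, mem_Ioo]; tauto)
  have hle : nhdsWithin (1:ℝ) (Iio 1) ≤ nhdsWithin (1:ℝ) (uIcc (0:ℝ) 1) := by
    rw [heq, huIcc]; exact nhdsWithin_mono _ Ioo_subset_Icc_self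
  have hF1 : (∫ t in (0:ℝ)..1, f t) = 1 / w * realBeta (1 - 1 / v) (1 / w) := by
    rw [intervalIntegral.integral_of_le zero_le_one,
      MeasureTheory.integral_Ioc_eq_integral_Ioo, hval]
  have := hcw.tendsto.mono_left hle
  rwa [hF1] at this

lemma case2 {v w : ℝ} (hw : 0 < w) (hv0 : 0 < v) (hv1 : v ≤ 1) :
    Tendsto (fun y : ℝ => ∫ t in (0:ℝ)..y, (1 - t ^ w) ^ (-1 / v))
      (nhdsWithin 1 (Iio 1)) atTop := by
  set f : ℝ → ℝ := fun t => (1 - t ^ w) ^ (-1/v) with hfdef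
  have hp : -1/v ≤ -1 := by
    rw [neg_div]
    have : 1 ≤ 1/v := by rw [le_div_iff₀ hv0]; linarith
    linarith
  have hcont : ContinuousOn f (Ico 0 1) := by
    intro x hx
    apply ContinuousAt.continuousWithinAt
    have h1 : (0:ℝ) < 1 - x ^ w := sub_pos.mpr (Real.rpow_lt_one hx.1 hx.2 hw)
    have hin : ContinuousAt (fun t : ℝ => 1 - t ^ w) x :=
      continuousAt_const.sub (Real.continuousAt_rpow_const _ _ (Or.inr hw.le))
    exact hin.rpow_const (Or.inl h1.ne')
  have hci : ∀ {c d : ℝ}, 0 ≤ c → c ≤ d → d < 1 → IntervalIntegrable f volume c d := by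
    intro c d h0 hcd hd1
    apply (hcont.mono ?_).intervalIntegrable
    rw [uIcc_of_le hcd]
    exact fun x hx => ⟨le_trans h0 hx.1, lt_of_le_of_lt hx.2 hd1⟩
  have hlow : ∀ y ∈ Ico (1/2:ℝ) 1,
      (2*w)⁻¹ * (-Real.log (1 - y) - Real.log 2) ≤ ∫ t in (0:ℝ)..y, f t := by
    intro y hy
    have hy0 : (1/2:ℝ) ≤ y := hy.1
    have hy1 : y < 1 := hy.2
    have hGcont : ContinuousOn (fun t : ℝ => (2*w*(1-t))⁻¹) (uIcc (1/2:ℝ) y) := by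
      apply ContinuousOn.inv₀
      · fun_prop
      · intro t ht
        rw [uIcc_of_le hy0] at ht
        have h1t : (0:ℝ) < 1 - t := by
          have : t < 1 := lt_of_le_of_lt ht.2 hy1
          linarith
        positivity
    have hGint : IntervalIntegrable (fun t : ℝ => (2*w*(1-t))⁻¹) volume (1/2) y :=
      hGcont.intervalIntegrable
    have hsplit : (∫ t in (0:ℝ)..(1/2:ℝ), f t) + (∫ t in (1/2:ℝ)..y, f t)
        = ∫ t in (0:ℝ)..y, f t :=
      intervalIntegral.integral_add_adjacent_intervals
        (hci le_rfl (by norm_num) (by norm_num)) (hci (by norm_num) hy0 hy1)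
    have h1 : 0 ≤ ∫ t in (0:ℝ)..(1/2:ℝ), f t := by
      apply intervalIntegral.integral_nonneg (by norm_num)
      intro u hu
      have : u ^ w ≤ 1 := Real.rpow_le_one hu.1 (le_trans hu.2 (by norm_num)) hw.le
      exact Real.rpow_nonneg (by linarith) _
    have h2 : (∫ t in (1/2:ℝ)..y, (2*w*(1-t))⁻¹) ≤ ∫ t in (1/2:ℝ)..y, f t := by
      apply intervalIntegral.integral_mono_on hy0 hGint (hci (by norm_num) hy0 hy1)
      intro t ht
      have ht0 : (0:ℝ) < t := lt_of_lt_of_le (by norm_num) ht.1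
      have ht1 : t < 1 := lt_of_le_of_lt ht.2 hy1
      have htw1 : t ^ w < 1 := Real.rpow_lt_one ht0.le ht1 hw
      have hb0 : (0:ℝ) < 1 - t ^ w := sub_pos.mpr htw1
      have e1 : 1 - t ^ w ≤ w * (-Real.log t) := by
        rw [Real.rpow_def_of_pos ht0]
        have h := Real.add_one_le_exp (Real.log t * w)
        nlinarith
      have e2 : -Real.log t ≤ 2 * (1 - t) := by
        have h4 := Real.log_le_sub_one_of_pos (inv_pos.mpr ht0)
        rw [Real.log_inv] at h4
        have hti : t * t⁻¹ = 1 := mul_inv_cancel₀ ht0.ne'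
        nlinarith [ht.1, ht1]
      have e3 : 1 - t ^ w ≤ 2*w*(1-t) := by nlinarith [mul_le_mul_of_nonneg_left e2 hw.le]
      have s1 : (2*w*(1-t))⁻¹ ≤ (1 - t ^ w)⁻¹ := inv_anti₀ hb0 e3
      have s2 : (1 - t ^ w)⁻¹ = (1 - t ^ w) ^ (-1:ℝ) := (Real.rpow_neg_one _).symm
      have hble : 1 - t ^ w ≤ 1 := by
        have := Real.rpow_nonneg ht0.le w
        linarith
      have s3 : (1 - t ^ w) ^ (-1:ℝ) ≤ (1 - t ^ w) ^ (-1/v) :=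
        Real.rpow_le_rpow_of_exponent_ge hb0 hble hp
      calc (2*w*(1-t))⁻¹ ≤ (1 - t ^ w) ^ (-1:ℝ) := s2 ▸ s1
        _ ≤ f t := s3
    have h3 : (∫ t in (1/2:ℝ)..y, (2*w*(1-t))⁻¹)
        = (2*w)⁻¹ * (-Real.log (1 - y) - Real.log 2) := by
      have hder : ∀ t ∈ uIcc (1/2:ℝ) y,
          HasDerivAt (fun t : ℝ => -(2*w)⁻¹ * Real.log (1-t)) ((2*w*(1-t))⁻¹) t := by
        intro t ht
        rw [uIcc_of_le hy0] at ht
        have h1t : (0:ℝ) < 1 - t := by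
          have : t < 1 := lt_of_le_of_lt ht.2 hy1
          linarith
        have hd : HasDerivAt (fun t : ℝ => 1 - t) (-1) t := (hasDerivAt_id t).const_sub 1
        have hlog : HasDerivAt (fun t : ℝ => Real.log (1 - t)) ((1-t)⁻¹ * (-1)) t :=
          (Real.hasDerivAt_log h1t.ne').comp t hd
        have := hlog.const_mul (-(2*w)⁻¹)
        exact this.congr_deriv (by simp only [mul_inv]; ring)
      rw [intervalIntegral.integral_eq_sub_of_hasDerivAt hder hGint]
      have : (1:ℝ) - 1/2 = 2⁻¹ := by norm_num
      rw [this, Real.log_inv]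
      ring
    linarith
  have hlog : Tendsto (fun y : ℝ => -Real.log (1 - y)) (nhdsWithin 1 (Iio 1)) atTop := by
    have h1 : Tendsto (fun y : ℝ => 1 - y) (nhdsWithin 1 (Iio 1)) (nhdsWithin 0 (Ioi 0)) := by
      rw [tendsto_nhdsWithin_iff]
      constructor
      · have h : Tendsto (fun y : ℝ => 1 - y) (nhds 1) (nhds 0) := by
          have hc : Continuous (fun y : ℝ => 1 - y) := by continuity
          have := hc.tendsto (1:ℝ)
          simpa using this
        exact h.mono_left nhdsWithin_le_nhds
      · filter_upwards [self_mem_nhdsWithin] with y hy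
        simp only [mem_Ioi]
        have : y < 1 := hy
        linarith
    exact tendsto_neg_atBot_atTop.comp (Real.tendsto_log_nhdsGT_zero.comp h1)
  have hL : Tendsto (fun y : ℝ => (2*w)⁻¹ * (-Real.log (1-y) - Real.log 2))
      (nhdsWithin 1 (Iio 1)) atTop := by
    apply Tendsto.const_mul_atTop (by positivity : (0:ℝ) < (2*w)⁻¹)
    simpa [sub_eq_add_neg] using tendsto_atTop_add_const_right (nhdsWithin (1:ℝ) (Iio 1))
      (-Real.log 2) hlog
  apply tendsto_atTop_mono' _ _ hL
  have hIoi : Ioi (1/2:ℝ) ∈ nhds (1:ℝ) := Ioi_mem_nhds (by norm_num)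
  filter_upwards [self_mem_nhdsWithin, mem_nhdsWithin_of_mem_nhds hIoi] with y h1 h2
  exact hlow y ⟨le_of_lt h2, h1⟩

theorem stmt0 (v w : ℝ) (hv : v ≠ 0) (hw : 0 < w) :
    (v ∉ Set.Icc (0:ℝ) 1 →
      Tendsto (fun y : ℝ => ∫ t in (0:ℝ)..y, (1 - t ^ w) ^ (-1 / v))
        (nhdsWithin 1 (Set.Iio 1)) (nhds (1 / w * realBeta (1 - 1 / v) (1 / w)))) ∧
    (v ∈ Set.Ioc (0:ℝ) 1 →
      Tendsto (fun y : ℝ => ∫ t in (0:ℝ)..y, (1 - t ^ w) ^ (-1 / v))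
        (nhdsWithin 1 (Set.Iio 1)) atTop) := by
  constructor
  · intro hv1
    have hb : 0 < 1 - 1/v := by
      rcases lt_or_ge v 0 with h | h
      · have : 1/v < 0 := by
          rw [one_div]
          exact inv_lt_zero.mpr h
        linarith
      · have hv1' : 1 < v := by
          by_contra hcon
          push_neg at hcon
          exact hv1 ⟨h, hcon⟩
        have : 1/v < 1 := by
          rw [div_lt_one (by linarith)]
          linarith
        linarith
    exact case1 hw hb
  · intro hv2
    exact case2 hw hv2.1 hv2.2
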